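/- Let Ω ⊂ ℝ^d be open bounded, and consider u ∈ C([0,T]; C²(Ω̄)) ∩ C¹((0,T]; C(Ω̄)) solving ∂_t u − div(q∇u) = f in Ω×(0,T], u = 0 on ∂Ω×(0,T], u(0) = u₀, with q ∈ C¹(Ω̄), q ≥ c₀ > 0. Assume: f ≥ c_f > 0 and ∂_t f ≤ 0 in Ω×(0,T]; u₀ ≥ 0 in Ω; and f(·,0) + div(q∇u₀) ≤ 0 in Ω. Then u(x,t) ≥ 0 and ∂_t u(x,t) ≤ 0 for all (x,t) ∈ Ω̄ × [0,T], and consequently q(x)|∇u(x,t)|² + (f(x,t) − ∂_t u(x,t)) u(x,t) ≥ min(c₀, c_f)(|∇u(x,t)|² + u(x,t)) for all (x,t). -/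

import Mathlib

open MeasureTheory Set

/-- Divergence of a vector field on Euclidean space. -/
noncomputable def ediv {d : ℕ}
    (V : EuclideanSpace ℝ (Fin d) → EuclideanSpace ℝ (Fin d))
    (x : EuclideanSpace ℝ (Fin d)) : ℝ :=
  ∑ i, fderiv ℝ V x (EuclideanSpace.single i 1) i

section Auxiliary

open Filter Topology InnerProductSpace

variable {d : ℕ}

lemma deriv_nonneg_of_max_left {p : ℝ → ℝ} {a b t₀ dv : ℝ} (ha : a < t₀) (hb : t₀ ≤ b)
    (hd : HasDerivWithinAt p dv (Icc a b) t₀)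
    (hmax : ∀ s ∈ Icc a b, p s ≤ p t₀) : 0 ≤ dv := by
  have hsub : Icc a t₀ ⊆ Icc a b := Icc_subset_Icc le_rfl hb
  have hd' := hd.mono hsub
  have hslope := hasDerivWithinAt_iff_tendsto_slope.1 hd'
  have hne : (𝓝[Icc a t₀ \ {t₀}] t₀).NeBot := by
    rw [← mem_closure_iff_nhdsWithin_neBot]
    apply closure_mono (show Ico a t₀ ⊆ Icc a t₀ \ {t₀} by
      intro s hs; exact ⟨⟨hs.1, hs.2.le⟩, ne_of_lt hs.2⟩)
    rw [closure_Ico (ne_of_lt ha)]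
    exact ⟨le_of_lt ha, le_rfl⟩
  refine ge_of_tendsto hslope ?_
  filter_upwards [self_mem_nhdsWithin] with s hs
  rcases hs with ⟨hs1, hs2⟩
  have hlt : s < t₀ := lt_of_le_of_ne hs1.2 hs2
  have hnum : p s - p t₀ ≤ 0 := sub_nonpos.2 (hmax s (hsub hs1))
  have hden : s - t₀ < 0 := sub_neg.2 hlt
  rw [slope_def_field]
  exact div_nonneg_of_nonpos hnum hden.le

lemma deriv_nonpos_of_antitone {p : ℝ → ℝ} {a b t dv : ℝ} (hab : a < b) (ht : t ∈ Icc a b)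
    (hd : HasDerivWithinAt p dv (Icc a b) t)
    (hmono : ∀ s ∈ Icc a b, ∀ s' ∈ Icc a b, s ≤ s' → p s' ≤ p s) : dv ≤ 0 := by
  have hslope := hasDerivWithinAt_iff_tendsto_slope.1 hd
  have hne : (𝓝[Icc a b \ {t}] t).NeBot := by
    rw [← mem_closure_iff_nhdsWithin_neBot]
    rcases lt_or_eq_of_le ht.2 with h | h
    · apply closure_mono (show Ioc t b ⊆ Icc a b \ {t} by
        intro s hs; exact ⟨⟨le_trans ht.1 hs.1.le, hs.2⟩, ne_of_gt hs.1⟩)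
      rw [closure_Ioc (ne_of_lt h)]
      exact ⟨le_rfl, h.le⟩
    · apply closure_mono (show Ico a t ⊆ Icc a b \ {t} by
        intro s hs; exact ⟨⟨hs.1, hs.2.le.trans ht.2⟩, ne_of_lt hs.2⟩)
      have hat : a ≠ t := by rw [h]; exact ne_of_lt hab
      rw [closure_Ico hat]
      exact ⟨ht.1, le_rfl⟩
  refine le_of_tendsto hslope ?_
  filter_upwards [self_mem_nhdsWithin] with s hs
  rcases hs with ⟨hs1, hs2⟩
  rw [slope_def_field]
  rcases lt_or_gt_of_ne hs2 with hlt | hgt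
  · exact div_nonpos_of_nonneg_of_nonpos (sub_nonneg.2 (hmono s hs1 t ht hlt.le))
      (sub_nonpos.2 hlt.le)
  · exact div_nonpos_of_nonpos_of_nonneg (sub_nonpos.2 (hmono t ht s hs1 hgt.le))
      (sub_nonneg.2 hgt.le)

lemma second_deriv_nonpos_of_isLocalMax {g g' : ℝ → ℝ} {c : ℝ}
    (hg : ∀ᶠ s in 𝓝 (0:ℝ), HasDerivAt g (g' s) s)
    (hg' : HasDerivAt g' c 0)
    (hmax : IsLocalMax g 0) : c ≤ 0 := by
  by_contra hc
  push_neg at hc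
  have hg'0 : g' 0 = 0 := hmax.hasDerivAt_eq_zero (hg.self_of_nhds)
  have hslope := hasDerivAt_iff_tendsto_slope.1 hg'
  have hpos : ∀ᶠ s in 𝓝[>] (0:ℝ), 0 < g' s := by
    have h1 : ∀ᶠ s in 𝓝[≠] (0:ℝ), 0 < slope g' 0 s :=
      hslope.eventually (eventually_gt_nhds hc)
    have h2 : ∀ᶠ s in 𝓝[>] (0:ℝ), 0 < slope g' 0 s :=
      h1.filter_mono (nhdsWithin_mono _ (fun s hs => ne_of_gt hs))
    filter_upwards [h2, self_mem_nhdsWithin] with s hs hs'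
    have : 0 < (g' s - g' 0) / (s - 0) := by rwa [slope_def_field] at hs
    rw [hg'0, sub_zero, sub_zero] at this
    have hspos : (0:ℝ) < s := hs'
    have := mul_pos this hspos
    rwa [div_mul_cancel₀ _ (ne_of_gt hspos)] at this
  rcases (nhdsGT_basis (0:ℝ)).eventually_iff.1 hpos with ⟨δ₁, hδ₁, H1⟩
  rcases Metric.eventually_nhds_iff.1 hg with ⟨δ₂, hδ₂, H2⟩
  rcases Metric.eventually_nhds_iff.1 hmax with ⟨δ₃, hδ₃, H3⟩
  set δ := min (min (δ₂/2) (δ₃/2)) δ₁ with hδdef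
  have hδpos : 0 < δ := lt_min (lt_min (by linarith) (by linarith)) hδ₁
  have hδlt2 : δ < δ₂ := lt_of_le_of_lt (le_trans (min_le_left _ _) (min_le_left _ _)) (by linarith)
  have hδlt3 : δ < δ₃ :=
    lt_of_le_of_lt (le_trans (min_le_left _ _) (min_le_right _ _)) (by linarith)
  have hδle1 : δ ≤ δ₁ := min_le_right _ _
  have hmono : StrictMonoOn g (Icc 0 δ) := by
    apply strictMonoOn_of_hasDerivWithinAt_pos (f' := g') (convex_Icc _ _) ?_ ?_ ?_
    · intro s hs
      have : dist s (0:ℝ) < δ₂ := by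
        rw [Real.dist_eq, sub_zero, abs_of_nonneg hs.1]
        exact lt_of_le_of_lt hs.2 hδlt2
      exact (H2 this).continuousAt.continuousWithinAt
    · intro s hs
      rw [interior_Icc] at hs
      have : dist s (0:ℝ) < δ₂ := by
        rw [Real.dist_eq, sub_zero, abs_of_nonneg hs.1.le]
        exact lt_of_lt_of_le hs.2 (le_of_lt hδlt2)
      exact (H2 this).hasDerivWithinAt
    · intro s hs
      rw [interior_Icc] at hs
      exact H1 ⟨hs.1, lt_of_lt_of_le hs.2 hδle1⟩
  have h1 : g 0 < g δ := hmono ⟨le_rfl, hδpos.le⟩ ⟨hδpos.le, le_rfl⟩ hδpos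
  have h2 : g δ ≤ g 0 := by
    apply H3
    rw [Real.dist_eq, sub_zero, abs_of_nonneg hδpos.le]
    exact hδlt3
  linarith

lemma gradient_eq' {f : EuclideanSpace ℝ (Fin d) → ℝ} {x : EuclideanSpace ℝ (Fin d)} :
    gradient f x = (toDual ℝ (EuclideanSpace ℝ (Fin d))).symm (fderiv ℝ f x) := rfl

lemma my_gradient_neg {f : EuclideanSpace ℝ (Fin d) → ℝ} {x : EuclideanSpace ℝ (Fin d)} :
    gradient (fun y => -(f y)) x = -gradient f x := by
  rw [gradient_eq', gradient_eq', fderiv_fun_neg, map_neg]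

lemma my_gradient_sub_const {f : EuclideanSpace ℝ (Fin d) → ℝ} {x : EuclideanSpace ℝ (Fin d)}
    (c : ℝ) : gradient (fun y => f y - c) x = gradient f x := by
  rw [gradient_eq', gradient_eq', fderiv_sub_const]

lemma my_gradient_sub {f g : EuclideanSpace ℝ (Fin d) → ℝ} {x : EuclideanSpace ℝ (Fin d)}
    (hf : DifferentiableAt ℝ f x) (hg : DifferentiableAt ℝ g x) :
    gradient (fun y => f y - g y) x = gradient f x - gradient g x := by
  rw [gradient_eq', gradient_eq', gradient_eq', fderiv_fun_sub hf hg, map_sub]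

lemma ediv_congr_nhds {V W : EuclideanSpace ℝ (Fin d) → EuclideanSpace ℝ (Fin d)}
    {x : EuclideanSpace ℝ (Fin d)} (h : V =ᶠ[𝓝 x] W) : ediv V x = ediv W x := by
  unfold ediv; rw [h.fderiv_eq]

lemma ediv_neg {V : EuclideanSpace ℝ (Fin d) → EuclideanSpace ℝ (Fin d)}
    {x : EuclideanSpace ℝ (Fin d)} : ediv (fun y => -V y) x = -ediv V x := by
  unfold ediv
  rw [fderiv_fun_neg]
  simp [Finset.sum_neg_distrib]

lemma ediv_sub {V W : EuclideanSpace ℝ (Fin d) → EuclideanSpace ℝ (Fin d)}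
    {x : EuclideanSpace ℝ (Fin d)} (hV : DifferentiableAt ℝ V x)
    (hW : DifferentiableAt ℝ W x) :
    ediv (fun y => V y - W y) x = ediv V x - ediv W x := by
  unfold ediv
  rw [fderiv_fun_sub hV hW]
  simp [Finset.sum_sub_distrib]

lemma contDiffAt_gradient {f : EuclideanSpace ℝ (Fin d) → ℝ} {x : EuclideanSpace ℝ (Fin d)}
    (hf : ContDiffAt ℝ 2 f x) : ContDiffAt ℝ 1 (fun y => gradient f y) x := by
  have h1 : ContDiffAt ℝ 1 (fderiv ℝ f) x := hf.fderiv_right (by norm_num)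
  have h2 : ContDiff ℝ 1 (fun φ : EuclideanSpace ℝ (Fin d) →L[ℝ] ℝ =>
      (toDual ℝ (EuclideanSpace ℝ (Fin d))).symm φ) :=
    (toDual ℝ (EuclideanSpace ℝ (Fin d))).symm.contDiff
  exact (h2.contDiffAt).comp x h1

lemma diffAt_smul_grad {f q : EuclideanSpace ℝ (Fin d) → ℝ} {x : EuclideanSpace ℝ (Fin d)}
    (hf : ContDiffAt ℝ 2 f x) (hq : DifferentiableAt ℝ q x) :
    DifferentiableAt ℝ (fun y => q y • gradient f y) x :=
  hq.smul ((contDiffAt_gradient hf).differentiableAt one_ne_zero)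

lemma fderiv_apply_single {v : EuclideanSpace ℝ (Fin d) → ℝ} {y : EuclideanSpace ℝ (Fin d)}
    (i : Fin d) : fderiv ℝ v y (EuclideanSpace.single i 1) = gradient v y i := by
  have h := toDual_symm_apply (𝕜 := ℝ) (E := EuclideanSpace ℝ (Fin d))
    (x := EuclideanSpace.single i (1:ℝ)) (y := fderiv ℝ v y)
  rw [← gradient_eq'] at h
  rw [← h, EuclideanSpace.inner_single_right]
  simp

/-- At an interior local maximum of a `C²` function `v`, `div (q ∇v) ≤ 0` provided `q ≥ 0`. -/
lemma ediv_smul_grad_nonpos {v q : EuclideanSpace ℝ (Fin d) → ℝ} {x : EuclideanSpace ℝ (Fin d)}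
    (hv : ContDiffAt ℝ 2 v x) (hq : DifferentiableAt ℝ q x) (hq0 : 0 ≤ q x)
    (hmax : IsLocalMax v x) :
    ediv (fun y => q y • gradient v y) x ≤ 0 := by
  set G : EuclideanSpace ℝ (Fin d) → EuclideanSpace ℝ (Fin d) := fun y => gradient v y with hGdef
  have hG1 : ContDiffAt ℝ 1 G x := contDiffAt_gradient hv
  have hGdiff : DifferentiableAt ℝ G x := hG1.differentiableAt one_ne_zero
  have hG0 : G x = 0 := by
    show gradient v x = 0
    rw [gradient_eq', hmax.fderiv_eq_zero]; simp
  have hfd : fderiv ℝ (fun y => q y • G y) x = q x • fderiv ℝ G x := by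
    rw [fderiv_fun_smul hq hGdiff, hG0]
    ext w j
    simp
  have key : ∀ i : Fin d, (fderiv ℝ G x (EuclideanSpace.single i 1)) i ≤ 0 := by
    intro i
    set e : EuclideanSpace ℝ (Fin d) := EuclideanSpace.single i (1:ℝ) with he
    set c : ℝ → EuclideanSpace ℝ (Fin d) := fun s => x + s • e with hc
    have hc0 : c 0 = x := by simp [hc]
    have hccont : Continuous c := by fun_prop
    have hcderiv : ∀ s : ℝ, HasDerivAt c e s := by
      intro s
      simpa [hc] using ((hasDerivAt_id s).smul_const e).const_add x
    have htend : Tendsto c (𝓝 0) (𝓝 x) := by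
      rw [← hc0]; exact hccont.continuousAt
    set g : ℝ → ℝ := fun s => v (c s) with hgdef
    set g' : ℝ → ℝ := fun s => G (c s) i with hg'def
    have hgmax : IsLocalMax g 0 := by
      have := htend.eventually hmax
      filter_upwards [this] with s hs
      simpa [hgdef, hc0] using hs
    have hev : ∀ᶠ s in 𝓝 (0:ℝ), HasDerivAt g (g' s) s := by
      have hvev : ∀ᶠ y in 𝓝 x, ContDiffAt ℝ 2 v y := hv.eventually (by norm_num)
      filter_upwards [htend.eventually hvev] with s hs
      have hdiff : DifferentiableAt ℝ v (c s) := hs.differentiableAt (by norm_num)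
      have h1 : HasDerivAt (fun t => v (c t)) (fderiv ℝ v (c s) e) s :=
        hdiff.hasFDerivAt.comp_hasDerivAt s (hcderiv s)
      have h2 : fderiv ℝ v (c s) e = G (c s) i := fderiv_apply_single i
      have : g' s = fderiv ℝ v (c s) e := h2.symm
      rw [this]
      exact h1
    have hg'deriv : HasDerivAt g' ((fderiv ℝ G x e) i) 0 := by
      have h1 : HasDerivAt (fun s => G (c s)) (fderiv ℝ G x e) 0 := by
        have hG' : HasFDerivAt G (fderiv ℝ G x) (c 0) := by rw [hc0]; exact hGdiff.hasFDerivAt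
        exact hG'.comp_hasDerivAt 0 (hcderiv 0)
      have h2 := (EuclideanSpace.proj i (𝕜 := ℝ)).hasFDerivAt.comp_hasDerivAt 0 h1
      exact h2
    exact second_deriv_nonpos_of_isLocalMax hev hg'deriv hgmax
  unfold ediv
  rw [hfd]
  have hterm : ∀ i : Fin d, (q x • fderiv ℝ G x) (EuclideanSpace.single i 1) i ≤ 0 := by
    intro i
    have h1 : (q x • fderiv ℝ G x) (EuclideanSpace.single i 1) i
        = q x * (fderiv ℝ G x (EuclideanSpace.single i 1)) i := by
      simp [ContinuousLinearMap.smul_apply]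
    rw [h1]
    exact mul_nonpos_of_nonneg_of_nonpos hq0 (key i)
  exact Finset.sum_nonpos (fun i _ => hterm i)

/-- Parabolic weak maximum principle, strict version. -/
lemma maxPrinciple_strict {Ω : Set (EuclideanSpace ℝ (Fin d))}
    (hΩ : IsOpen Ω) (hΩb : Bornology.IsBounded Ω)
    {a b : ℝ} {q : EuclideanSpace ℝ (Fin d) → ℝ}
    (hqd : ∀ x ∈ Ω, DifferentiableAt ℝ q x) (hq0 : ∀ x ∈ Ω, 0 ≤ q x)
    {v vt : ℝ → EuclideanSpace ℝ (Fin d) → ℝ}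
    (hv2 : ∀ t ∈ Ioc a b, ∀ x ∈ Ω, ContDiffAt ℝ 2 (v t) x)
    (hvcont : ContinuousOn (fun p : ℝ × EuclideanSpace ℝ (Fin d) => v p.1 p.2)
      (Icc a b ×ˢ closure Ω))
    (hvt : ∀ t ∈ Ioc a b, ∀ x ∈ Ω, HasDerivWithinAt (fun s => v s x) (vt t x) (Icc a b) t)
    (hineq : ∀ t ∈ Ioc a b, ∀ x ∈ Ω,
      vt t x - ediv (fun y => q y • gradient (v t) y) x < 0)
    (hbdry : ∀ t ∈ Ioc a b, ∀ x ∈ frontier Ω, v t x ≤ 0)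
    (hinit : ∀ x ∈ closure Ω, v a x ≤ 0) :
    ∀ t ∈ Icc a b, ∀ x ∈ closure Ω, v t x ≤ 0 := by
  by_contra hcon
  push_neg at hcon
  obtain ⟨t₁, ht₁, x₁, hx₁, hpos⟩ := hcon
  have hK : IsCompact (Icc a b ×ˢ closure Ω) := isCompact_Icc.prod hΩb.isCompact_closure
  obtain ⟨⟨t₀, x₀⟩, hmem, hmax⟩ := hK.exists_isMaxOn ⟨(t₁, x₁), ⟨ht₁, hx₁⟩⟩ hvcont
  have ht₀ : t₀ ∈ Icc a b := hmem.1
  have hx₀cl : x₀ ∈ closure Ω := hmem.2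
  have hvmax : ∀ s ∈ Icc a b, ∀ y ∈ closure Ω, v s y ≤ v t₀ x₀ := by
    intro s hs y hy; exact hmax (Set.mk_mem_prod hs hy)
  have hvpos : 0 < v t₀ x₀ := lt_of_lt_of_le hpos (hvmax t₁ ht₁ x₁ hx₁)
  have ht₀a : a < t₀ := by
    rcases lt_or_eq_of_le ht₀.1 with h | h
    · exact h
    · exact absurd (lt_of_lt_of_le hvpos (by rw [← h]; exact hinit x₀ hx₀cl)) (lt_irrefl 0)
  have ht₀Ioc : t₀ ∈ Ioc a b := ⟨ht₀a, ht₀.2⟩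
  have hx₀ : x₀ ∈ Ω := by
    by_contra hx
    have hfr : x₀ ∈ frontier Ω := by
      rw [frontier_eq_closure_inter_closure, hΩ.isClosed_compl.closure_eq]
      exact ⟨hx₀cl, hx⟩
    exact absurd (lt_of_lt_of_le hvpos (hbdry t₀ ht₀Ioc x₀ hfr)) (lt_irrefl 0)
  have hdt : 0 ≤ vt t₀ x₀ :=
    deriv_nonneg_of_max_left ht₀a ht₀.2 (hvt t₀ ht₀Ioc x₀ hx₀)
      (fun s hs => hvmax s hs x₀ hx₀cl)
  have hlocmax : IsLocalMax (v t₀) x₀ := by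
    filter_upwards [hΩ.mem_nhds hx₀] with y hy
    exact hvmax t₀ ht₀ y (subset_closure hy)
  have hdiv : ediv (fun y => q y • gradient (v t₀) y) x₀ ≤ 0 :=
    ediv_smul_grad_nonpos (hv2 t₀ ht₀Ioc x₀ hx₀) (hqd x₀ hx₀) (hq0 x₀ hx₀) hlocmax
  have := hineq t₀ ht₀Ioc x₀ hx₀
  linarith

/-- Parabolic weak maximum principle. -/
lemma maxPrinciple {Ω : Set (EuclideanSpace ℝ (Fin d))}
    (hΩ : IsOpen Ω) (hΩb : Bornology.IsBounded Ω)
    {a b : ℝ} (hab : a < b) {q : EuclideanSpace ℝ (Fin d) → ℝ}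
    (hqd : ∀ x ∈ Ω, DifferentiableAt ℝ q x) (hq0 : ∀ x ∈ Ω, 0 ≤ q x)
    {v vt : ℝ → EuclideanSpace ℝ (Fin d) → ℝ}
    (hv2 : ∀ t ∈ Ioc a b, ∀ x ∈ Ω, ContDiffAt ℝ 2 (v t) x)
    (hvcont : ContinuousOn (fun p : ℝ × EuclideanSpace ℝ (Fin d) => v p.1 p.2)
      (Icc a b ×ˢ closure Ω))
    (hvt : ∀ t ∈ Ioc a b, ∀ x ∈ Ω, HasDerivWithinAt (fun s => v s x) (vt t x) (Icc a b) t)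
    (hineq : ∀ t ∈ Ioc a b, ∀ x ∈ Ω,
      vt t x - ediv (fun y => q y • gradient (v t) y) x ≤ 0)
    (hbdry : ∀ t ∈ Ioc a b, ∀ x ∈ frontier Ω, v t x ≤ 0)
    (hinit : ∀ x ∈ closure Ω, v a x ≤ 0) :
    ∀ t ∈ Icc a b, ∀ x ∈ closure Ω, v t x ≤ 0 := by
  have key : ∀ ε > (0:ℝ), ∀ t ∈ Icc a b, ∀ x ∈ closure Ω, v t x - ε * (t - a) ≤ 0 := by
    intro ε hε
    apply maxPrinciple_strict hΩ hΩb hqd hq0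
      (v := fun t x => v t x - ε * (t - a)) (vt := fun t x => vt t x - ε)
    · intro t ht x hx
      exact (hv2 t ht x hx).sub contDiffAt_const
    · apply hvcont.sub
      fun_prop
    · intro t ht x hx
      have h2 : HasDerivWithinAt (fun s : ℝ => ε * (s - a)) ε (Icc a b) t := by
        simpa using ((hasDerivWithinAt_id t (Icc a b)).sub_const a).const_mul ε
      exact (hvt t ht x hx).sub h2
    · intro t ht x hx
      have harg : (fun y => q y • gradient (fun z => v t z - ε * (t - a)) y)
          = (fun y => q y • gradient (v t) y) := by
        funext y
        rw [my_gradient_sub_const]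
      rw [harg]
      have := hineq t ht x hx
      linarith
    · intro t ht x hx
      have h1 : 0 ≤ ε * (t - a) := mul_nonneg hε.le (by linarith [ht.1])
      have := hbdry t ht x hx
      linarith
    · intro x hx
      simpa using hinit x hx
  intro t ht x hx
  by_contra hcon
  push_neg at hcon
  have hba : 0 < b - a := by linarith
  set ε := v t x / (2 * (b - a)) with hεdef
  have hεpos : 0 < ε := div_pos hcon (by linarith)
  have h1 := key ε hεpos t ht x hx
  have h2 : ε * (t - a) ≤ ε * (b - a) := by
    apply mul_le_mul_of_nonneg_left _ hεpos.le
    linarith [ht.2]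
  have h3 : ε * (b - a) = v t x / 2 := by
    rw [hεdef]; field_simp
  linarith

lemma nonneg_on_closure {s : Set (EuclideanSpace ℝ (Fin d))} {g : EuclideanSpace ℝ (Fin d) → ℝ}
    (hg : ContinuousOn g (closure s)) (h : ∀ x ∈ s, 0 ≤ g x) :
    ∀ x ∈ closure s, 0 ≤ g x := by
  intro x hx
  have hne : (𝓝[s] x).NeBot := mem_closure_iff_nhdsWithin_neBot.1 hx
  have h1 : Filter.Tendsto g (𝓝[s] x) (𝓝 (g x)) := (hg x hx).mono subset_closure
  refine ge_of_tendsto h1 ?_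
  filter_upwards [self_mem_nhdsWithin] with y hy
  exact h y hy

end Auxiliary

/-- Maximum-principle part of Proposition 4.8: under the sign conditions
`f ≥ c_f > 0`, `∂_t f ≤ 0`, `u₀ ≥ 0`, `f(·,0) + div(q∇u₀) ≤ 0`, the solution of
`∂_t u − div(q∇u) = f` with homogeneous Dirichlet data satisfies `u ≥ 0`,
`∂_t u ≤ 0`, and hence
`q|∇u|² + (f − ∂_t u) u ≥ min(c₀, c_f)(|∇u|² + u)` on `Ω̄ × [0,T]`. -/
theorem parabolic_positivity
    {d : ℕ} (Ω : Set (EuclideanSpace ℝ (Fin d)))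
    (hΩ : IsOpen Ω) (hΩb : Bornology.IsBounded Ω)
    (T c₀ cf : ℝ) (hT : 0 < T) (hc₀ : 0 < c₀) (hcf : 0 < cf)
    (q u₀ : EuclideanSpace ℝ (Fin d) → ℝ)
    (u ut f ft : ℝ → EuclideanSpace ℝ (Fin d) → ℝ)
    -- `q ∈ C¹(Ω̄)` with `q ≥ c₀ > 0`
    (hq : ContDiffOn ℝ 1 q (closure Ω))
    (hqpos : ∀ x ∈ closure Ω, c₀ ≤ q x)
    -- regularity of `u`: `C([0,T]; C²(Ω̄)) ∩ C¹((0,T]; C(Ω̄))`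
    (hureg : ∀ t ∈ Icc (0:ℝ) T, ContDiffOn ℝ 2 (u t) (closure Ω))
    (hucont : ContinuousOn (fun p : ℝ × EuclideanSpace ℝ (Fin d) => u p.1 p.2)
      (Icc 0 T ×ˢ closure Ω))
    (hut : ∀ x ∈ closure Ω, ∀ t ∈ Icc (0:ℝ) T,
      HasDerivWithinAt (fun s => u s x) (ut t x) (Icc 0 T) t)
    (hutcont : ContinuousOn (fun p : ℝ × EuclideanSpace ℝ (Fin d) => ut p.1 p.2)
      (Icc 0 T ×ˢ closure Ω))
    -- regularity of `f` and its time derivative `ft`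
    (hft : ∀ x ∈ closure Ω, ∀ t ∈ Icc (0:ℝ) T,
      HasDerivWithinAt (fun s => f s x) (ft t x) (Icc 0 T) t)
    -- the parabolic equation `∂_t u − div(q∇u) = f` in `Ω × (0,T]`
    (hpde : ∀ t ∈ Ioc (0:ℝ) T, ∀ x ∈ Ω,
      ut t x - ediv (fun y => q y • gradient (u t) y) x = f t x)
    -- homogeneous Dirichlet boundary condition on `∂Ω × (0,T]`
    (hbc : ∀ t ∈ Ioc (0:ℝ) T, ∀ x ∈ frontier Ω, u t x = 0)
    -- initial condition
    (hic : ∀ x ∈ closure Ω, u 0 x = u₀ x)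
    -- sign conditions on the data
    (hf : ∀ t ∈ Ioc (0:ℝ) T, ∀ x ∈ Ω, cf ≤ f t x)
    (hftneg : ∀ t ∈ Ioc (0:ℝ) T, ∀ x ∈ Ω, ft t x ≤ 0)
    (hu₀reg : ContDiffOn ℝ 2 u₀ (closure Ω))
    (hu₀pos : ∀ x ∈ Ω, 0 ≤ u₀ x)
    (hcomp : ∀ x ∈ Ω, f 0 x + ediv (fun y => q y • gradient u₀ y) x ≤ 0) :
    ∀ t ∈ Icc (0:ℝ) T, ∀ x ∈ closure Ω,
      0 ≤ u t x ∧ ut t x ≤ 0 ∧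
      min c₀ cf * (‖gradient (u t) x‖ ^ 2 + u t x)
        ≤ q x * ‖gradient (u t) x‖ ^ 2 + (f t x - ut t x) * u t x := by
  have hclnhds : ∀ x ∈ Ω, closure Ω ∈ nhds x := fun x hx =>
    Filter.mem_of_superset (hΩ.mem_nhds hx) subset_closure
  have hu2At : ∀ t ∈ Icc (0:ℝ) T, ∀ x ∈ Ω, ContDiffAt ℝ 2 (u t) x := fun t ht x hx =>
    (hureg t ht).contDiffAt (hclnhds x hx)
  have hu₀At : ∀ x ∈ Ω, ContDiffAt ℝ 2 u₀ x := fun x hx => hu₀reg.contDiffAt (hclnhds x hx)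
  have hqd : ∀ x ∈ Ω, DifferentiableAt ℝ q x := fun x hx =>
    ((hq.contDiffAt (hclnhds x hx)).differentiableAt one_ne_zero)
  have hq0 : ∀ x ∈ Ω, 0 ≤ q x := fun x hx => le_trans hc₀.le (hqpos x (subset_closure hx))
  have hu₀cl : ∀ x ∈ closure Ω, 0 ≤ u₀ x := nonneg_on_closure hu₀reg.continuousOn hu₀pos
  -- antitonicity of f in time
  have hfanti : ∀ x ∈ Ω, AntitoneOn (fun s => f s x) (Icc 0 T) := by
    intro x hx
    apply antitoneOn_of_hasDerivWithinAt_nonpos (f' := fun s => ft s x) (convex_Icc _ _)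
    · intro s hs
      exact (hft x (subset_closure hx) s hs).continuousWithinAt
    · intro s hs
      rw [interior_Icc] at hs ⊢
      exact (hft x (subset_closure hx) s ⟨hs.1.le, hs.2.le⟩).mono Ioo_subset_Icc_self
    · intro s hs
      rw [interior_Icc] at hs
      exact hftneg s ⟨hs.1, hs.2.le⟩ x hx
  have hfIcc : ∀ t ∈ Icc (0:ℝ) T, ∀ x ∈ Ω, cf ≤ f t x := by
    intro t ht x hx
    have h1 : f T x ≤ f t x := hfanti x hx ht ⟨hT.le, le_rfl⟩ ht.2
    exact le_trans (hf T ⟨hT, le_rfl⟩ x hx) h1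
  -- Step B : u t ≤ u₀ on [0,T] × closure Ω
  have hstepB : ∀ t ∈ Icc (0:ℝ) T, ∀ x ∈ closure Ω, u t x - u₀ x ≤ 0 := by
    apply maxPrinciple hΩ hΩb hT hqd hq0 (vt := fun t x => ut t x)
    · intro t ht x hx
      exact (hu2At t ⟨ht.1.le, ht.2⟩ x hx).sub (hu₀At x hx)
    · exact hucont.sub (hu₀reg.continuousOn.comp continuous_snd.continuousOn
        (fun p hp => hp.2))
    · intro t ht x hx
      exact (hut x (subset_closure hx) t ⟨ht.1.le, ht.2⟩).sub_const (u₀ x)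
    · intro t ht x hx
      have harg : (fun y => q y • gradient (fun z => u t z - u₀ z) y)
          =ᶠ[nhds x] fun y => (q y • gradient (u t) y) - (q y • gradient u₀ y) := by
        filter_upwards [hΩ.mem_nhds hx] with y hy
        rw [my_gradient_sub ((hu2At t ⟨ht.1.le, ht.2⟩ y hy).differentiableAt (by norm_num))
          ((hu₀At y hy).differentiableAt (by norm_num)), smul_sub]
      show ut t x - ediv (fun y => q y • gradient (fun z => u t z - u₀ z) y) x ≤ 0
      rw [ediv_congr_nhds harg,
        ediv_sub (diffAt_smul_grad (hu2At t ⟨ht.1.le, ht.2⟩ x hx) (hqd x hx))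
          (diffAt_smul_grad (hu₀At x hx) (hqd x hx))]
      have e1 := hpde t ht x hx
      have h2 : f t x ≤ f 0 x := hfanti x hx ⟨le_rfl, hT.le⟩ ⟨ht.1.le, ht.2⟩ ht.1.le
      have h3 := hcomp x hx
      linarith
    · intro t ht x hx
      show u t x - u₀ x ≤ 0
      have h1 := hbc t ht x hx
      have h2 := hu₀cl x (frontier_subset_closure hx)
      linarith
    · intro x hx
      show u 0 x - u₀ x ≤ 0
      rw [hic x hx]
      linarith
  -- Step A : u ≥ 0
  have hstepA : ∀ t ∈ Icc (0:ℝ) T, ∀ x ∈ closure Ω, 0 ≤ u t x := by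
    have h := maxPrinciple hΩ hΩb hT hqd hq0 (v := fun t x => -(u t x))
      (vt := fun t x => -(ut t x)) ?_ ?_ ?_ ?_ ?_ ?_
    · intro t ht x hx
      have h' : -u t x ≤ 0 := h t ht x hx
      linarith
    · intro t ht x hx
      exact (hu2At t ⟨ht.1.le, ht.2⟩ x hx).neg
    · exact hucont.neg
    · intro t ht x hx
      exact (hut x (subset_closure hx) t ⟨ht.1.le, ht.2⟩).neg
    · intro t ht x hx
      have harg : (fun y => q y • gradient (fun z => -(u t z)) y)
          = fun y => -(q y • gradient (u t) y) := by
        funext y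
        rw [my_gradient_neg, smul_neg]
      show -ut t x - ediv (fun y => q y • gradient (fun z => -(u t z)) y) x ≤ 0
      rw [harg, ediv_neg]
      have e1 := hpde t ht x hx
      have h2 := hf t ht x hx
      linarith
    · intro t ht x hx
      show -u t x ≤ 0
      rw [hbc t ht x hx]
      norm_num
    · intro x hx
      show -u 0 x ≤ 0
      rw [hic x hx]
      linarith [hu₀cl x hx]
  -- Step C : antitonicity of u in time
  have hanti : ∀ x ∈ closure Ω, ∀ t₁ ∈ Icc (0:ℝ) T, ∀ t₂ ∈ Icc (0:ℝ) T, t₁ ≤ t₂ →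
      u t₂ x ≤ u t₁ x := by
    intro x hx t₁ ht₁ t₂ ht₂ h12
    rcases eq_or_lt_of_le h12 with rfl | hlt
    · exact le_rfl
    rcases eq_or_lt_of_le ht₁.1 with h0 | h0
    · have hB := hstepB t₂ ht₂ x hx
      have h0' := hic x hx
      rw [← h0]
      linarith
    · -- 0 < t₁
      obtain ⟨h, hh⟩ : ∃ h : ℝ, h = t₂ - t₁ := ⟨_, rfl⟩
      have hhpos : 0 < h := by rw [hh]; linarith
      have hbpos : 0 < T - h := by rw [hh]; linarith [ht₂.2]
      have key := maxPrinciple hΩ hΩb hbpos hqd hq0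
        (v := fun t y => u (t + h) y - u t y)
        (vt := fun t y => ut (t + h) y - ut t y) ?_ ?_ ?_ ?_ ?_ ?_
      · have hkey : u (t₁ + h) x - u t₁ x ≤ 0 := key t₁ ⟨ht₁.1, by rw [hh]; linarith [ht₂.2]⟩ x hx
        have ht1h : t₁ + h = t₂ := by rw [hh]; ring
        rw [ht1h] at hkey
        linarith
      · intro t ht y hy
        exact (hu2At (t + h) ⟨by linarith [ht.1, hhpos.le], by linarith [ht.2, hhpos.le]⟩ y hy).sub
          (hu2At t ⟨ht.1.le, by linarith [ht.2, hhpos.le]⟩ y hy)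
      · apply ContinuousOn.sub
        · exact hucont.comp (by fun_prop : Continuous fun p : ℝ × EuclideanSpace ℝ (Fin d) =>
            (p.1 + h, p.2)).continuousOn
            (fun p hp => ⟨⟨by show (0:ℝ) ≤ p.1 + h; linarith [hp.1.1, hhpos.le],
              by show p.1 + h ≤ T; linarith [hp.1.2, hhpos.le]⟩, hp.2⟩)
        · exact hucont.mono (prod_mono (Icc_subset_Icc le_rfl (by linarith [hhpos.le])) subset_rfl)
      · intro t ht y hy
        have h1 : HasDerivWithinAt (fun s => u s y) (ut (t + h) y) (Icc 0 T) (t + h) :=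
          hut y (subset_closure hy) (t + h) ⟨by linarith [ht.1, hhpos.le], by linarith [ht.2, hhpos.le]⟩
        have h2 : HasDerivWithinAt (fun s : ℝ => s + h) 1 (Icc 0 (T - h)) t :=
          (hasDerivWithinAt_id t _).add_const h
        have h3 : MapsTo (fun s : ℝ => s + h) (Icc 0 (T - h)) (Icc 0 T) := by
          intro s hs
          exact ⟨by show (0:ℝ) ≤ s + h; linarith [hs.1, hhpos.le],
            by show s + h ≤ T; linarith [hs.2, hhpos.le]⟩
        have h4 := HasDerivWithinAt.comp t h1 h2 h3
        have h5 : HasDerivWithinAt (fun s => u (s + h) y) (ut (t + h) y) (Icc 0 (T - h)) t := by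
          rw [mul_one] at h4; exact h4
        exact h5.sub ((hut y (subset_closure hy) t
          ⟨ht.1.le, by linarith [ht.2, hhpos.le]⟩).mono (Icc_subset_Icc le_rfl (by linarith [hhpos.le])))
      · intro t ht y hy
        have htIoc : t ∈ Ioc (0:ℝ) T := ⟨ht.1, by linarith [ht.2, hhpos.le]⟩
        have hthIoc : t + h ∈ Ioc (0:ℝ) T := ⟨by linarith [ht.1, hhpos.le], by linarith [ht.2, hhpos.le]⟩
        show ut (t + h) y - ut t y
          - ediv (fun z => q z • gradient (fun w => u (t + h) w - u t w) z) y ≤ 0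
        have harg : (fun z => q z • gradient (fun w => u (t + h) w - u t w) z)
            =ᶠ[nhds y] fun z => (q z • gradient (u (t + h)) z) - (q z • gradient (u t) z) := by
          filter_upwards [hΩ.mem_nhds hy] with z hz
          rw [my_gradient_sub
            ((hu2At (t + h) ⟨hthIoc.1.le, hthIoc.2⟩ z hz).differentiableAt (by norm_num))
            ((hu2At t ⟨htIoc.1.le, htIoc.2⟩ z hz).differentiableAt (by norm_num)), smul_sub]
        rw [ediv_congr_nhds harg,
          ediv_sub (diffAt_smul_grad (hu2At (t + h) ⟨hthIoc.1.le, hthIoc.2⟩ y hy) (hqd y hy))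
            (diffAt_smul_grad (hu2At t ⟨htIoc.1.le, htIoc.2⟩ y hy) (hqd y hy))]
        have e1 := hpde (t + h) hthIoc y hy
        have e2 := hpde t htIoc y hy
        have h2 : f (t + h) y ≤ f t y :=
          hfanti y hy ⟨htIoc.1.le, htIoc.2⟩ ⟨hthIoc.1.le, hthIoc.2⟩ (by linarith)
        linarith
      · intro t ht y hy
        show u (t + h) y - u t y ≤ 0
        have h1 := hbc (t + h) ⟨by linarith [ht.1, hhpos.le], by linarith [ht.2, hhpos.le]⟩ y hy
        have h2 := hbc t ⟨ht.1, by linarith [ht.2, hhpos.le]⟩ y hy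
        linarith
      · intro y hy
        show u (0 + h) y - u 0 y ≤ 0
        have h1 := hstepB h ⟨hhpos.le, by rw [hh]; linarith [ht₂.2, ht₁.1]⟩ y hy
        have h2 := hic y hy
        rw [zero_add]
        linarith
  -- Step D : ut ≤ 0 everywhere
  have hutneg : ∀ t ∈ Icc (0:ℝ) T, ∀ x ∈ closure Ω, ut t x ≤ 0 := by
    intro t ht x hx
    exact deriv_nonpos_of_antitone hT ht (hut x hx t ht)
      (fun s hs s' hs' hss' => hanti x hx s hs s' hs' hss')
  -- frontier values are zero
  have hfr0 : ∀ t ∈ Icc (0:ℝ) T, ∀ x ∈ frontier Ω, u t x = 0 := by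
    intro t ht x hx
    rcases eq_or_lt_of_le ht.1 with h0 | h0
    · -- t = 0 : use continuity in time
      have hxcl : x ∈ closure Ω := frontier_subset_closure hx
      have hcont : ContinuousOn (fun s => u s x) (Icc 0 T) := by
        intro s hs
        exact (hut x hxcl s hs).continuousWithinAt
      have hne : (nhdsWithin (0:ℝ) (Ioc (0:ℝ) T)).NeBot := by
        rw [← mem_closure_iff_nhdsWithin_neBot, closure_Ioc hT.ne]
        exact ⟨le_rfl, hT.le⟩
      have h1 : Filter.Tendsto (fun s => u s x) (nhdsWithin (0:ℝ) (Ioc (0:ℝ) T))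
          (nhds (u 0 x)) :=
        ((hcont 0 ⟨le_rfl, hT.le⟩).mono Ioc_subset_Icc_self)
      have h2 : Filter.Tendsto (fun s => u s x) (nhdsWithin (0:ℝ) (Ioc (0:ℝ) T)) (nhds 0) := by
        apply Filter.Tendsto.congr' _ tendsto_const_nhds
        filter_upwards [self_mem_nhdsWithin] with s hs
        exact (hbc s hs x hx).symm
      rw [← h0]
      exact tendsto_nhds_unique h1 h2
    · exact hbc t ⟨h0, ht.2⟩ x hx
  -- conclusion
  intro t ht x hx
  refine ⟨hstepA t ht x hx, hutneg t ht x hx, ?_⟩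
  by_cases hxΩ : x ∈ Ω
  · have hfcf : cf ≤ f t x := hfIcc t ht x hxΩ
    have hu0 := hstepA t ht x hx
    have hut0 := hutneg t ht x hx
    have hq' : c₀ ≤ q x := hqpos x hx
    have hg2 : (0:ℝ) ≤ ‖gradient (u t) x‖ ^ 2 := sq_nonneg _
    have hm1 : min c₀ cf ≤ c₀ := min_le_left _ _
    have hm2 : min c₀ cf ≤ cf := min_le_right _ _
    nlinarith [mul_le_mul_of_nonneg_right (le_trans hm1 hq') hg2,
      mul_le_mul_of_nonneg_right (le_trans hm2 (by linarith : cf ≤ f t x - ut t x)) hu0]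
  · have hfr : x ∈ frontier Ω := by
      rw [frontier_eq_closure_inter_closure, hΩ.isClosed_compl.closure_eq]
      exact ⟨hx, hxΩ⟩
    have hu0 : u t x = 0 := hfr0 t ht x hfr
    rw [hu0]
    have hq' : c₀ ≤ q x := hqpos x hx
    have hm1 : min c₀ cf ≤ c₀ := min_le_left _ _
    have hg2 : (0:ℝ) ≤ ‖gradient (u t) x‖ ^ 2 := sq_nonneg _
    nlinarith
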